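/- arXiv:math/0303361 — 4 statements merged into one kernel-verified Lean document; each statement's English description precedes it below -/
import Mathlib

section
/- Let X be a complete separable metric space and T a semigroup acting on X by continuous selfmaps. If the action of T on X is strongly proximal, then the induced action of T on P(X) (the space of Borel probability measures with the weak* topology) is proximal. -/
open MeasureTheory Filter Topology BoundedContinuousFunction
open scoped ENNReal NNReal

noncomputable instance instMSPM {Ω : Type*} [MeasurableSpace Ω] [TopologicalSpace Ω]
    [OpensMeasurableSpace Ω] : MeasurableSpace (ProbabilityMeasure Ω) := borel _

instance instBSPM {Ω : Type*} [MeasurableSpace Ω] [TopologicalSpace Ω]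
    [OpensMeasurableSpace Ω] : BorelSpace (ProbabilityMeasure Ω) := ⟨rfl⟩

noncomputable def push {X : Type*} [MeasurableSpace X] [TopologicalSpace X] [BorelSpace X]
    (t : C(X, X)) (μ : ProbabilityMeasure X) : ProbabilityMeasure X :=
  μ.map t.continuous.measurable.aemeasurable

noncomputable def diracPM {X : Type*} [MeasurableSpace X] (x : X) : ProbabilityMeasure X :=
  ⟨Measure.dirac x, inferInstance⟩

lemma aux_tendsto {X : Type*} [MetricSpace X] [MeasurableSpace X] [BorelSpace X]
    {ν μ : ℕ → ProbabilityMeasure X} {x : X}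
    (hle : ∀ n, (ν n : Measure X) ≤ (2:ℝ≥0∞) • (μ n : Measure X))
    (hμ : Tendsto μ atTop (𝓝 (diracPM x))) :
    Tendsto ν atTop (𝓝 (diracPM x)) := by
  apply MeasureTheory.tendsto_of_forall_isOpen_le_liminf
  intro G hG
  by_cases hx : x ∈ G
  · -- closed complement carries no dirac mass
    have hd : (diracPM x : Measure X) Gᶜ = 0 := by
      simp [diracPM, Measure.dirac_apply' _ hG.measurableSet.compl, hx]
    have hlimsup : atTop.limsup (fun n => (μ n : Measure X) Gᶜ) ≤ 0 := by
      simpa [hd] using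
        ProbabilityMeasure.limsup_measure_closed_le_of_tendsto hμ hG.isClosed_compl
    have hμ0 : Tendsto (fun n => (μ n : Measure X) Gᶜ) atTop (𝓝 0) := by
      refine tendsto_of_le_liminf_of_limsup_le (le_refl 0 |>.trans zero_le) hlimsup
    have hν0 : Tendsto (fun n => (ν n : Measure X) Gᶜ) atTop (𝓝 0) := by
      have h2 : Tendsto (fun n => (2 : ℝ≥0∞) * (μ n : Measure X) Gᶜ) atTop (𝓝 0) := by
        have := ENNReal.Tendsto.const_mul (a := (2:ℝ≥0∞)) hμ0 (Or.inr ENNReal.ofNat_ne_top)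
        simpa using this
      refine tendsto_of_tendsto_of_tendsto_of_le_of_le tendsto_const_nhds h2
        (fun n => zero_le) (fun n => ?_)
      have := hle n Gᶜ
      simpa [Measure.smul_apply, smul_eq_mul] using this
    have hν1 : Tendsto (fun n => (ν n : Measure X) G) atTop (𝓝 1) := by
      have hrw : ∀ n, (ν n : Measure X) G = 1 - (ν n : Measure X) Gᶜ := by
        intro n
        have := measure_compl (μ := (ν n : Measure X)) hG.measurableSet.compl
          (measure_ne_top _ _)
        simpa [compl_compl] using this
      simp only [hrw]
      have := ENNReal.Tendsto.sub (tendsto_const_nhds (x := (1:ℝ≥0∞))) hν0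
        (Or.inl (by norm_num))
      simpa using this
    have hν1' : Tendsto (fun n => ν n G) atTop (𝓝 1) := by
      have := (ENNReal.tendsto_toNNReal (by norm_num : (1:ℝ≥0∞) ≠ ⊤)).comp hν1
      simpa [Function.comp_def, ProbabilityMeasure.coeFn_def] using this
    calc (diracPM x) G ≤ 1 := (diracPM x).apply_le_one G
      _ = atTop.liminf (fun n => ν n G) := (hν1'.liminf_eq).symm
  · have : (diracPM x) G = 0 := by
      simp [diracPM, ProbabilityMeasure.coeFn_def,
        Measure.dirac_apply' _ hG.measurableSet, hx]
    simp [this]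

/-- If the action of a semigroup `T` on a complete separable metric space `X`
(by continuous self-maps) is strongly proximal, then the induced action on `P(X)`
is proximal. -/
theorem stmt0 {X : Type*} [MetricSpace X] [CompleteSpace X]
    [TopologicalSpace.SeparableSpace X] [MeasurableSpace X] [BorelSpace X]
    {T : Type*} [Semigroup T] (act : T → C(X, X))
    (hact : ∀ s t : T, act (s * t) = (act s).comp (act t))
    (hsp : ∀ lam : ProbabilityMeasure X, ∃ (t : ℕ → T) (x : X),
      Tendsto (fun n => push (act (t n)) lam) atTop (𝓝 (diracPM x))) :
    ∀ lam₁ lam₂ : ProbabilityMeasure X, ∃ (t : ℕ → T) (μ : ProbabilityMeasure X),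
      Tendsto (fun n => push (act (t n)) lam₁) atTop (𝓝 μ) ∧
      Tendsto (fun n => push (act (t n)) lam₂) atTop (𝓝 μ) := by
  intro lam₁ lam₂
  have hprob : IsProbabilityMeasure
      ((2:ℝ≥0∞)⁻¹ • (lam₁ : Measure X) + (2:ℝ≥0∞)⁻¹ • (lam₂ : Measure X)) := by
    constructor
    simp [Measure.smul_apply, smul_eq_mul, ENNReal.inv_two_add_inv_two]
  obtain ⟨t, x, ht⟩ := hsp ⟨_, hprob⟩
  have key : ∀ n, (2:ℝ≥0∞) • ((push (act (t n)) ⟨_, hprob⟩ : ProbabilityMeasure X) : Measure X)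
      = (push (act (t n)) lam₁ : Measure X) + (push (act (t n)) lam₂ : Measure X) := by
    intro n
    have hmeas := (act (t n)).continuous.measurable
    simp only [push, ProbabilityMeasure.toMeasure_map]
    show (2:ℝ≥0∞) • Measure.map (act (t n))
        ((2:ℝ≥0∞)⁻¹ • (lam₁ : Measure X) + (2:ℝ≥0∞)⁻¹ • (lam₂ : Measure X)) = _
    rw [Measure.map_add _ _ hmeas, Measure.map_smul, Measure.map_smul, smul_add,
      smul_smul, smul_smul, ENNReal.mul_inv_cancel two_ne_zero ENNReal.ofNat_ne_top,
      one_smul, one_smul]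
  refine ⟨t, diracPM x, ?_, ?_⟩
  · refine aux_tendsto (μ := fun n => push (act (t n)) ⟨_, hprob⟩) (fun n => ?_) ht
    rw [key n]
    exact Measure.le_intro fun s hs _ => by simp [Measure.add_apply]
  · refine aux_tendsto (μ := fun n => push (act (t n)) ⟨_, hprob⟩) (fun n => ?_) ht
    rw [key n]
    exact Measure.le_intro fun s hs _ => by simp [Measure.add_apply]
end

section
/- Let X be a complete separable metric space and T a semigroup acting on X by continuous selfmaps. If the induced action of T on P(X) is proximal, then the action of T on X is strongly proximal. -/
open MeasureTheory Filter Topology BoundedContinuousFunction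

/-- If the induced action of a semigroup `T` on `P(X)` is proximal, then the action of
`T` on the complete separable metric space `X` is strongly proximal. -/
theorem stmt1 {X : Type*} [MetricSpace X] [CompleteSpace X]
    [TopologicalSpace.SeparableSpace X] [MeasurableSpace X] [BorelSpace X]
    {T : Type*} [Semigroup T] (act : T → C(X, X))
    (hact : ∀ s t : T, act (s * t) = (act s).comp (act t))
    (hprox : ∀ lam₁ lam₂ : ProbabilityMeasure X, ∃ (t : ℕ → T) (μ : ProbabilityMeasure X),
      Tendsto (fun n => push (act (t n)) lam₁) atTop (𝓝 μ) ∧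
      Tendsto (fun n => push (act (t n)) lam₂) atTop (𝓝 μ)) :
    ∀ lam : ProbabilityMeasure X, ∃ (t : ℕ → T) (x : X),
      Tendsto (fun n => push (act (t n)) lam) atTop (𝓝 (diracPM x)) := by
  intro lam
  -- X is nonempty since it carries a probability measure
  have hXne : Nonempty X := by
    by_contra h
    rw [not_nonempty_iff] at h
    have h1 : (lam : Measure X) Set.univ = 1 := measure_univ
    rw [Set.univ_eq_empty_iff.mpr h, measure_empty] at h1
    exact zero_ne_one h1
  haveI : SecondCountableTopology X :=
    UniformSpace.secondCountable_of_separable X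
  obtain ⟨x₀⟩ := hXne
  obtain ⟨t, μ, h1, h2⟩ := hprox lam (diracPM x₀)
  -- pushing a Dirac measure yields a Dirac measure
  have hpushdirac : ∀ (s : T) (x : X), push (act s) (diracPM x) = diracPM ((act s) x) := by
    intro s x
    apply ProbabilityMeasure.toMeasure_injective
    show ((diracPM x : Measure X)).map (act s) = Measure.dirac ((act s) x)
    exact Measure.map_dirac' (act s).continuous.measurable x
  set xn : ℕ → X := fun n => (act (t n)) x₀ with hxn
  have h2' : Tendsto (fun n => diracPM (xn n)) atTop (𝓝 μ) := by
    simpa only [hpushdirac] using h2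
  -- find a point all of whose balls have positive μ-measure
  have hy : ∃ y : X, ∀ ε : ℝ, 0 < ε → 0 < (μ : Measure X) (Metric.ball y ε) := by
    by_contra h
    push_neg at h
    have h' : ∀ y : X, ∃ ε : ℝ, 0 < ε ∧ (μ : Measure X) (Metric.ball y ε) = 0 := by
      intro y
      obtain ⟨ε, hε, hle⟩ := h y
      exact ⟨ε, hε, le_antisymm hle zero_le⟩
    choose ε hε hnull using h'
    obtain ⟨Tc, hTc, hTS, hTU⟩ := TopologicalSpace.isOpen_sUnion_countable
      ((fun y => Metric.ball y (ε y)) '' Set.univ)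
      (by rintro s ⟨y, -, rfl⟩; exact Metric.isOpen_ball)
    have hnul : (μ : Measure X) (⋃₀ Tc) = 0 := by
      refine (measure_sUnion_null_iff hTc).mpr fun s hs => ?_
      obtain ⟨y, -, rfl⟩ := hTS hs
      exact hnull y
    have huniv : ⋃₀ Tc = Set.univ := by
      rw [hTU]
      apply Set.eq_univ_of_forall
      intro x
      exact ⟨Metric.ball x (ε x), ⟨x, trivial, rfl⟩, Metric.mem_ball_self (hε x)⟩
    rw [huniv, measure_univ] at hnul
    exact one_ne_zero hnul
  obtain ⟨y, hy⟩ := hy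
  -- the points xn converge to y
  have hxy : Tendsto xn atTop (𝓝 y) := by
    rw [Metric.tendsto_atTop]
    intro ε hε
    have hopen : IsOpen (Metric.ball y ε) := Metric.isOpen_ball
    have hlim := ProbabilityMeasure.le_liminf_measure_open_of_tendsto h2' hopen
    have hpos : (0 : ENNReal) < atTop.liminf
        fun n => ((diracPM (xn n) : Measure X)) (Metric.ball y ε) :=
      lt_of_lt_of_le (hy ε hε) hlim
    have hev := eventually_lt_of_lt_liminf hpos
    rw [eventually_atTop] at hev
    obtain ⟨N, hN⟩ := hev
    refine ⟨N, fun n hn => ?_⟩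
    have := hN n hn
    by_contra hcon
    have hnot : xn n ∉ Metric.ball y ε := by
      simpa [Metric.mem_ball] using hcon
    rw [show ((diracPM (xn n) : Measure X)) = Measure.dirac (xn n) from rfl,
      Measure.dirac_apply' _ Metric.isOpen_ball.measurableSet,
      Set.indicator_of_notMem hnot] at this
    exact lt_irrefl _ this
  -- hence the Dirac measures converge to the Dirac at y
  have hdir : Tendsto (fun n => diracPM (xn n)) atTop (𝓝 (diracPM y)) := by
    rw [ProbabilityMeasure.tendsto_iff_forall_integral_tendsto]
    intro f
    have : ∀ z : X, ∫ ω, f ω ∂((diracPM z : Measure X)) = f z := by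
      intro z
      exact integral_dirac f z
    simp only [this]
    exact (f.continuous.tendsto y).comp hxy
  have hμ : μ = diracPM y := tendsto_nhds_unique h2' hdir
  exact ⟨t, y, hμ ▸ h1⟩
end

section
/- Let X be a compact metric space and T a topological semigroup acting on X by continuous maps. The action of T on X is strongly proximal if and only if the induced action of T on P(X) is strongly proximal. -/
open MeasureTheory Filter Topology BoundedContinuousFunction
open scoped ENNReal NNReal

noncomputable def push2 {X : Type*} [MeasurableSpace X] [TopologicalSpace X] [BorelSpace X]
    (t : C(X, X)) (ρ : ProbabilityMeasure (ProbabilityMeasure X)) :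
    ProbabilityMeasure (ProbabilityMeasure X) :=
  ρ.map (ProbabilityMeasure.continuous_map t.continuous).measurable.aemeasurable

set_option linter.unusedSectionVars false

section Aux

variable {X : Type*} [MetricSpace X] [MeasurableSpace X] [BorelSpace X]

lemma continuous_lintegralBCF (f : X →ᵇ ℝ≥0) :
    Continuous (fun ν : ProbabilityMeasure X => ∫⁻ x, f x ∂ν.toMeasure) := by
  have : (fun ν : ProbabilityMeasure X => ∫⁻ x, f x ∂ν.toMeasure)
      = fun ν => ((ν.toFiniteMeasure.testAgainstNN f : ℝ≥0) : ℝ≥0∞) := by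
    funext ν
    rw [FiniteMeasure.testAgainstNN_coe_eq]
    rfl
  rw [this]
  exact ENNReal.continuous_coe.comp (ProbabilityMeasure.continuous_testAgainstNN_eval f)

lemma measurable_eval_closed {F : Set X} (hF : IsClosed F) :
    Measurable (fun ν : ProbabilityMeasure X => ν.toMeasure F) := by
  apply ENNReal.measurable_of_tendsto
    (f := fun n (ν : ProbabilityMeasure X) => ∫⁻ x, hF.apprSeq n x ∂ν.toMeasure)
  · exact fun n => (continuous_lintegralBCF (hF.apprSeq n)).measurable
  · rw [tendsto_pi_nhds]
    exact fun ν => HasOuterApproxClosed.tendsto_lintegral_apprSeq hF ν.toMeasure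

lemma measurable_eval {s : Set X} (hs : MeasurableSet s) :
    Measurable (fun ν : ProbabilityMeasure X => ν.toMeasure s) := by
  have compl_aux : ∀ (t : Set X), MeasurableSet t →
      Measurable (fun ν : ProbabilityMeasure X => ν.toMeasure t) →
      Measurable (fun ν : ProbabilityMeasure X => ν.toMeasure tᶜ) := by
    intro t ht hmeas
    have : (fun ν : ProbabilityMeasure X => ν.toMeasure tᶜ)
        = fun ν => 1 - ν.toMeasure t := by
      funext ν
      rw [measure_compl ht (measure_ne_top _ _), measure_univ]
    rw [this]
    exact ((ENNReal.continuous_sub_left ENNReal.one_ne_top).measurable).comp hmeas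
  refine MeasurableSet.induction_on_open ?_ compl_aux ?_ s hs
  · intro U hU
    have := compl_aux Uᶜ hU.isClosed_compl.measurableSet (measurable_eval_closed hU.isClosed_compl)
    simpa using this
  · intro f hdisj hmeas ih
    have : (fun ν : ProbabilityMeasure X => ν.toMeasure (⋃ i, f i))
        = fun ν => ∑' i, ν.toMeasure (f i) := by
      funext ν; exact measure_iUnion hdisj hmeas
    rw [this]
    exact Measurable.ennreal_tsum ih

lemma measurable_toMeasure :
    Measurable (fun ν : ProbabilityMeasure X => ν.toMeasure) :=
  Measure.measurable_of_measurable_coe _ fun _s hs => measurable_eval hs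

noncomputable def bary (ρ : ProbabilityMeasure (ProbabilityMeasure X)) : ProbabilityMeasure X :=
  ⟨(ρ.toMeasure.map (fun ν : ProbabilityMeasure X => ν.toMeasure)).join, by
    constructor
    rw [Measure.join_apply MeasurableSet.univ,
      lintegral_map (Measure.measurable_coe MeasurableSet.univ) measurable_toMeasure]
    simp⟩

lemma bary_apply (ρ : ProbabilityMeasure (ProbabilityMeasure X)) {s : Set X}
    (hs : MeasurableSet s) :
    (bary ρ).toMeasure s = ∫⁻ ν, ν.toMeasure s ∂ρ.toMeasure := by
  rw [show (bary ρ).toMeasure = (ρ.toMeasure.map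
      (fun ν : ProbabilityMeasure X => ν.toMeasure)).join from rfl,
    Measure.join_apply hs, lintegral_map (Measure.measurable_coe hs) measurable_toMeasure]

lemma push2_toMeasure (t : C(X, X)) (ρ : ProbabilityMeasure (ProbabilityMeasure X)) :
    (push2 t ρ).toMeasure = ρ.toMeasure.map (fun ν => push t ν) :=
  ρ.toMeasure_map _

lemma push_toMeasure (t : C(X, X)) (ν : ProbabilityMeasure X) :
    (push t ν).toMeasure = ν.toMeasure.map t :=
  ν.toMeasure_map _

lemma measurable_push (t : C(X, X)) : Measurable (fun ν : ProbabilityMeasure X => push t ν) :=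
  (ProbabilityMeasure.continuous_map t.continuous).measurable

lemma lintegral_eval_push2 (t : C(X, X)) (ρ : ProbabilityMeasure (ProbabilityMeasure X))
    {s : Set X} (hs : MeasurableSet s) :
    ∫⁻ ν, ν.toMeasure s ∂(push2 t ρ).toMeasure = (push t (bary ρ)).toMeasure s := by
  rw [push2_toMeasure, lintegral_map (measurable_eval hs) (measurable_push t)]
  have : ∀ ν : ProbabilityMeasure X, (push t ν).toMeasure s = ν.toMeasure (t ⁻¹' s) := by
    intro ν
    rw [push_toMeasure, Measure.map_apply t.continuous.measurable hs]
  simp_rw [this]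
  rw [← bary_apply ρ (t.continuous.measurable hs)]

lemma tendsto_of_forall_isOpen_le_liminf' {Ω : Type*} [MeasurableSpace Ω] [TopologicalSpace Ω]
    [OpensMeasurableSpace Ω] {μ : ProbabilityMeasure Ω} {μs : ℕ → ProbabilityMeasure Ω}
    (h_opens : ∀ G, IsOpen G → μ.toMeasure G ≤ atTop.liminf (fun i => (μs i).toMeasure G)) :
    Tendsto μs atTop (𝓝 μ) := by
  refine ProbabilityMeasure.tendsto_iff_forall_integral_tendsto.mpr ?_
  apply tendsto_integral_of_forall_integral_le_liminf_integral
  intro f f_nn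
  exact integral_le_liminf_integral_of_forall_isOpen_measure_le_liminf_measure (f := f) f_nn h_opens

lemma tendsto_diracPM_of_open {Ω : Type*} [MeasurableSpace Ω] [TopologicalSpace Ω]
    [OpensMeasurableSpace Ω] {x : Ω} {μs : ℕ → ProbabilityMeasure Ω}
    (h : ∀ G, IsOpen G → x ∈ G →
      Tendsto (fun n => (μs n).toMeasure G) atTop (𝓝 1)) :
    Tendsto μs atTop (𝓝 (diracPM x)) := by
  apply _root_.tendsto_of_forall_isOpen_le_liminf'
  intro G hG
  by_cases hx : x ∈ G
  · have : (diracPM x).toMeasure G = 1 := by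
      show Measure.dirac x G = 1
      rw [Measure.dirac_apply' _ hG.measurableSet, Set.indicator_of_mem hx]
      rfl
    rw [this, (h G hG hx).liminf_eq]
  · have : (diracPM x).toMeasure G = 0 := by
      show Measure.dirac x G = 0
      rw [Measure.dirac_apply' _ hG.measurableSet, Set.indicator_of_notMem hx]
    rw [this]
    exact zero_le

lemma tendsto_one_sub_invNat :
    Tendsto (fun k : ℕ => 1 - (1 : ℝ≥0∞) / (k + 1)) atTop (𝓝 1) := by
  have h0 : Tendsto (fun k : ℕ => (1 : ℝ≥0∞) / (k + 1)) atTop (𝓝 0) := by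
    have he : ∀ k : ℕ, (1 : ℝ≥0∞) / (k + 1) = ((k + 1 : ℕ) : ℝ≥0∞)⁻¹ := by
      intro k; rw [one_div]; norm_cast
    simp_rw [he]
    exact ENNReal.tendsto_inv_nat_nhds_zero.comp (tendsto_add_atTop_nat 1)
  have := ((ENNReal.continuous_sub_left ENNReal.one_ne_top).tendsto 0).comp h0
  simpa [Function.comp_def] using this

lemma invNat_pos (k : ℕ) : (0 : ℝ≥0∞) < 1 / (k + 1) := by
  simp [ENNReal.div_pos_iff]

lemma invNat_ne_top (k : ℕ) : (1 : ℝ≥0∞) / (k + 1) ≠ ∞ := by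
  simp [ENNReal.div_eq_top]

lemma one_le_measure_add_compl' {Ω : Type*} [MeasurableSpace Ω] (μ : Measure Ω)
    [IsProbabilityMeasure μ] (B : Set Ω) : (1 : ℝ≥0∞) ≤ μ B + μ Bᶜ := by
  calc (1 : ℝ≥0∞) = μ (B ∪ Bᶜ) := by rw [Set.union_compl_self, measure_univ]
  _ ≤ μ B + μ Bᶜ := measure_union_le _ _

lemma one_le_measure_add_compl {ν : ProbabilityMeasure X} (B : Set X) :
    (1 : ℝ≥0∞) ≤ ν.toMeasure B + ν.toMeasure Bᶜ :=
  one_le_measure_add_compl' _ B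

lemma exists_ball_subset {x : X} {G : Set (ProbabilityMeasure X)} (hG : IsOpen G)
    (hxG : diracPM x ∈ G) :
    ∃ k : ℕ, {ν : ProbabilityMeasure X |
      ν.toMeasure (Metric.ball x (1 / (k + 1)))ᶜ < 1 / (k + 1)} ⊆ G := by
  by_contra hcon
  push_neg at hcon
  have hch : ∀ k : ℕ, ∃ ν : ProbabilityMeasure X,
      (ν.toMeasure (Metric.ball x (1 / (k + 1)))ᶜ < 1 / (k + 1)) ∧ ν ∉ G := by
    intro k
    obtain ⟨ν, hν1, hν2⟩ := Set.not_subset.mp (hcon k)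
    exact ⟨ν, hν1, hν2⟩
  choose ν hν hνG using hch
  have htend : Tendsto ν atTop (𝓝 (diracPM x)) := by
    apply tendsto_diracPM_of_open
    intro U hU hxU
    obtain ⟨r, hr0, hrU⟩ := Metric.isOpen_iff.mp hU x hxU
    have hlow : ∀ᶠ k in atTop, 1 - (1 : ℝ≥0∞) / (k + 1) ≤ (ν k).toMeasure U := by
      obtain ⟨K, hK⟩ := exists_nat_one_div_lt hr0
      filter_upwards [eventually_ge_atTop K] with k hk
      have hradius : 1 / ((k : ℝ) + 1) ≤ 1 / ((K : ℝ) + 1) := by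
        apply one_div_le_one_div_of_le (by positivity)
        have : (K : ℝ) ≤ (k : ℝ) := Nat.cast_le.mpr hk
        linarith
      have hball : Metric.ball x (1 / ((k : ℝ) + 1)) ⊆ U :=
        (Metric.ball_subset_ball (le_trans hradius hK.le)).trans hrU
      calc 1 - (1 : ℝ≥0∞) / (k + 1)
          ≤ 1 - (ν k).toMeasure (Metric.ball x (1 / (k + 1)))ᶜ :=
            tsub_le_tsub_left (hν k).le 1
        _ ≤ (ν k).toMeasure (Metric.ball x (1 / (k + 1))) :=
            tsub_le_iff_right.mpr (one_le_measure_add_compl _)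
        _ ≤ (ν k).toMeasure U := measure_mono hball
    exact tendsto_of_tendsto_of_tendsto_of_le_of_le' tendsto_one_sub_invNat
      tendsto_const_nhds hlow (Eventually.of_forall fun k => prob_le_one)
  have hev : ∀ᶠ k in atTop, ν k ∈ G := htend (hG.mem_nhds hxG)
  obtain ⟨k, hk⟩ := hev.exists
  exact hνG k hk

lemma forward_key {x : X} {ρs : ℕ → ProbabilityMeasure (ProbabilityMeasure X)}
    {lams : ℕ → ProbabilityMeasure X}
    (hbar : ∀ n (s : Set X), MeasurableSet s →
      ∫⁻ ν, ν.toMeasure s ∂(ρs n).toMeasure = (lams n).toMeasure s)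
    (hconv : Tendsto lams atTop (𝓝 (diracPM x))) :
    Tendsto ρs atTop (𝓝 (diracPM (diracPM x))) := by
  apply tendsto_diracPM_of_open
  intro G hG hxG
  obtain ⟨k, hkG⟩ := exists_ball_subset hG hxG
  set B := Metric.ball x (1 / ((k : ℝ) + 1)) with hB
  set ε : ℝ≥0∞ := 1 / (k + 1) with hε
  set W := {ν : ProbabilityMeasure X | ν.toMeasure Bᶜ < ε} with hW
  have hBclosed : IsClosed Bᶜ := Metric.isOpen_ball.isClosed_compl
  have hxB : x ∈ B := Metric.mem_ball_self (by positivity)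
  have hzero : (diracPM x).toMeasure Bᶜ = 0 := by
    show Measure.dirac x Bᶜ = 0
    rw [Measure.dirac_apply' _ hBclosed.measurableSet,
      Set.indicator_of_notMem (by simpa using hxB)]
  have hlam0 : Tendsto (fun n => (lams n).toMeasure Bᶜ) atTop (𝓝 0) := by
    have hlimsup := ProbabilityMeasure.limsup_measure_closed_le_of_tendsto hconv hBclosed
    rw [hzero] at hlimsup
    exact tendsto_of_le_liminf_of_limsup_le zero_le hlimsup
  have hWc : ∀ n, (ρs n).toMeasure Wᶜ ≤ (lams n).toMeasure Bᶜ / ε := by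
    intro n
    have hWeq : Wᶜ = {ν : ProbabilityMeasure X | ε ≤ ν.toMeasure Bᶜ} := by
      ext ν; simp [hW, not_lt]
    rw [hWeq, ← hbar n Bᶜ hBclosed.measurableSet]
    exact meas_ge_le_lintegral_div (measurable_eval hBclosed.measurableSet).aemeasurable
      (invNat_pos k).ne' (invNat_ne_top k)
  have hdiv : Tendsto (fun n => (lams n).toMeasure Bᶜ / ε) atTop (𝓝 0) := by
    simp_rw [div_eq_mul_inv]
    have := ENNReal.Tendsto.mul_const hlam0
      (Or.inr (ENNReal.inv_ne_top.mpr (invNat_pos k).ne'))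
    rw [zero_mul] at this
    exact this
  have hWc0 : Tendsto (fun n => (ρs n).toMeasure Wᶜ) atTop (𝓝 0) :=
    tendsto_of_tendsto_of_tendsto_of_le_of_le tendsto_const_nhds hdiv
      (fun n => zero_le) hWc
  have hlower : ∀ n, 1 - (ρs n).toMeasure Wᶜ ≤ (ρs n).toMeasure G := by
    intro n
    refine le_trans (tsub_le_iff_right.mpr (one_le_measure_add_compl' _ W)) ?_
    exact measure_mono hkG
  have hone : Tendsto (fun n => 1 - (ρs n).toMeasure Wᶜ) atTop (𝓝 1) := by
    have := ((ENNReal.continuous_sub_left ENNReal.one_ne_top).tendsto 0).comp hWc0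
    simpa [Function.comp_def] using this
  exact tendsto_of_tendsto_of_tendsto_of_le_of_le hone tendsto_const_nhds hlower
    (fun n => prob_le_one)

lemma isOpen_eval_lt {F : Set X} (hF : IsClosed F) {ε : ℝ≥0∞} :
    IsOpen {ν : ProbabilityMeasure X | ν.toMeasure F < ε} := by
  have heq : {ν : ProbabilityMeasure X | ν.toMeasure F < ε}
      = ⋃ n, {ν : ProbabilityMeasure X | ∫⁻ x, hF.apprSeq n x ∂ν.toMeasure < ε} := by
    ext ν
    simp only [Set.mem_setOf_eq, Set.mem_iUnion]
    constructor
    · intro h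
      exact ((HasOuterApproxClosed.tendsto_lintegral_apprSeq hF
        ν.toMeasure).eventually_lt_const h).exists
    · rintro ⟨n, hn⟩
      exact lt_of_le_of_lt (HasOuterApproxClosed.measure_le_lintegral hF ν.toMeasure n) hn
  rw [heq]
  exact isOpen_iUnion fun n => (isOpen_Iio).preimage (continuous_lintegralBCF (hF.apprSeq n))

lemma diracPM_apply_eq_zero {Ω : Type*} [MeasurableSpace Ω] {x : Ω} {s : Set Ω}
    (hs : MeasurableSet s) (hx : x ∉ s) :
    (diracPM x).toMeasure s = 0 := by
  show Measure.dirac x s = 0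
  rw [Measure.dirac_apply' _ hs, Set.indicator_of_notMem hx]

lemma diracPM_apply_eq_one {Ω : Type*} [MeasurableSpace Ω] {x : Ω} {s : Set Ω}
    (hs : MeasurableSet s) (hx : x ∈ s) :
    (diracPM x).toMeasure s = 1 := by
  show Measure.dirac x s = 1
  rw [Measure.dirac_apply' _ hs, Set.indicator_of_mem hx]
  rfl

variable [CompactSpace X]

lemma backward_key {ρs : ℕ → ProbabilityMeasure (ProbabilityMeasure X)}
    {lams : ℕ → ProbabilityMeasure X}
    (hbar : ∀ n (s : Set X), MeasurableSet s →
      ∫⁻ ν, ν.toMeasure s ∂(ρs n).toMeasure = (lams n).toMeasure s)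
    {x : X} (hconv : Tendsto ρs atTop (𝓝 (diracPM (diracPM x)))) :
    Tendsto lams atTop (𝓝 (diracPM x)) := by
  letI : MetricSpace (ProbabilityMeasure X) :=
    TopologicalSpace.metrizableSpaceMetric (ProbabilityMeasure X)
  apply tendsto_diracPM_of_open
  intro U hU hxU
  refine tendsto_of_le_liminf_of_limsup_le ?_
    (limsup_le_of_le (by isBoundedDefault) (Eventually.of_forall fun n => prob_le_one))
  apply ENNReal.le_of_forall_pos_le_add
  intro ε hε _
  set G : Set (ProbabilityMeasure X) := {ν | ν.toMeasure Uᶜ < (ε : ℝ≥0∞)} with hG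
  have hGopen : IsOpen G := isOpen_eval_lt hU.isClosed_compl
  have hxG : diracPM x ∈ G := by
    have : (diracPM x).toMeasure Uᶜ = 0 :=
      diracPM_apply_eq_zero hU.isClosed_compl.measurableSet (by simpa using hxU)
    simp only [hG, Set.mem_setOf_eq, this]
    exact_mod_cast hε
  have h1 : (1 : ℝ≥0∞) ≤ atTop.liminf (fun n => (ρs n).toMeasure G) := by
    have := ProbabilityMeasure.le_liminf_measure_open_of_tendsto hconv hGopen
    rwa [diracPM_apply_eq_one hGopen.measurableSet hxG] at this
  have hGtend : Tendsto (fun n => (ρs n).toMeasure G) atTop (𝓝 1) :=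
    tendsto_of_le_liminf_of_limsup_le h1
      (limsup_le_of_le (by isBoundedDefault) (Eventually.of_forall fun n => prob_le_one))
  have hlow : ∀ n, (1 - (ε : ℝ≥0∞)) * (ρs n).toMeasure G ≤ (lams n).toMeasure U := by
    intro n
    rw [← hbar n U hU.measurableSet,
      ← lintegral_indicator_const hGopen.measurableSet (1 - (ε : ℝ≥0∞))]
    apply lintegral_mono
    intro ν
    by_cases hν : ν ∈ G
    · rw [Set.indicator_of_mem hν]
      calc 1 - (ε : ℝ≥0∞) ≤ 1 - ν.toMeasure Uᶜ := tsub_le_tsub_left hν.le 1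
        _ ≤ ν.toMeasure U := tsub_le_iff_right.mpr (one_le_measure_add_compl' _ U)
    · rw [Set.indicator_of_notMem hν]
      exact zero_le
  have hmul : Tendsto (fun n => (1 - (ε : ℝ≥0∞)) * (ρs n).toMeasure G) atTop
      (𝓝 (1 - (ε : ℝ≥0∞))) := by
    have := ENNReal.Tendsto.const_mul hGtend
      (Or.inr (by simp : (1 : ℝ≥0∞) - ε ≠ ∞))
    simpa using this
  have hliminf : atTop.liminf (fun n => (1 - (ε : ℝ≥0∞)) * (ρs n).toMeasure G)
      ≤ atTop.liminf (fun n => (lams n).toMeasure U) :=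
    liminf_le_liminf (Eventually.of_forall hlow)
  rw [hmul.liminf_eq] at hliminf
  exact tsub_le_iff_right.mp hliminf

lemma continuous_diracPM : Continuous (diracPM : X → ProbabilityMeasure X) := by
  have : (diracPM : X → ProbabilityMeasure X) = MeasureTheory.diracProba := by
    funext x
    exact Subtype.ext rfl
  rw [this]
  exact MeasureTheory.continuous_diracProba

lemma measurable_diracPM : Measurable (diracPM : X → ProbabilityMeasure X) :=
  continuous_diracPM.measurable

lemma bary_map_dirac (lam : ProbabilityMeasure X) :
    bary (lam.map measurable_diracPM.aemeasurable) = lam := by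
  apply Subtype.ext
  apply Measure.ext
  intro s hs
  rw [show (bary (lam.map measurable_diracPM.aemeasurable)).val
      = (bary (lam.map measurable_diracPM.aemeasurable)).toMeasure from rfl,
    bary_apply _ hs, ProbabilityMeasure.toMeasure_map,
    lintegral_map (measurable_eval hs) measurable_diracPM]
  have : ∀ x : X, (diracPM x).toMeasure s = s.indicator (fun _ => (1 : ℝ≥0∞)) x := by
    intro x
    show Measure.dirac x s = _
    rw [Measure.dirac_apply' _ hs]
    rfl
  simp_rw [this]
  exact lintegral_indicator_one hs

lemma push_diracPM (t : C(X, X)) (x : X) : push t (diracPM x) = diracPM (t x) := by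
  apply Subtype.ext
  rw [show (push t (diracPM x)).val = (push t (diracPM x)).toMeasure from rfl, push_toMeasure]
  exact Measure.map_dirac' t.continuous.measurable x

theorem stmt12' {T : Type*} (act : T → C(X, X)) :
    (∀ lam : ProbabilityMeasure X, ∃ (t : ℕ → T) (x : X),
      Tendsto (fun n => push (act (t n)) lam) atTop (𝓝 (diracPM x))) ↔
    (∀ ρ : ProbabilityMeasure (ProbabilityMeasure X), ∃ (t : ℕ → T) (μ : ProbabilityMeasure X),
      Tendsto (fun n => push2 (act (t n)) ρ) atTop (𝓝 (diracPM μ))) := by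
  constructor
  · intro h ρ
    obtain ⟨t, x, hconv⟩ := h (bary ρ)
    exact ⟨t, diracPM x,
      forward_key (fun n s hs => lintegral_eval_push2 (act (t n)) ρ hs) hconv⟩
  · intro h lam
    set ρ := lam.map measurable_diracPM.aemeasurable with hρ
    obtain ⟨t, μ, hconv⟩ := h ρ
    have hD : IsClosed (Set.range (diracPM : X → ProbabilityMeasure X)) :=
      (isCompact_range continuous_diracPM).isClosed
    have hone : ∀ n : ℕ, (push2 (act (t n)) ρ).toMeasure
        (Set.range (diracPM : X → ProbabilityMeasure X)) = 1 := by
      intro n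
      rw [push2_toMeasure, hρ, ProbabilityMeasure.toMeasure_map,
        Measure.map_apply (measurable_push _) hD.measurableSet,
        Measure.map_apply measurable_diracPM
          ((measurable_push _) hD.measurableSet)]
      have : (diracPM ⁻¹' ((fun ν => push (act (t n)) ν) ⁻¹' Set.range diracPM) : Set X)
          = Set.univ := by
        ext y
        simp only [Set.mem_preimage, Set.mem_univ, iff_true]
        exact ⟨act (t n) y, (push_diracPM (act (t n)) y).symm⟩
      rw [this, measure_univ]
    have hmem : μ ∈ Set.range (diracPM : X → ProbabilityMeasure X) := by
      by_contra hnot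
      have hlimsup := ProbabilityMeasure.limsup_measure_closed_le_of_tendsto hconv hD
      simp_rw [hone] at hlimsup
      rw [limsup_const, diracPM_apply_eq_zero hD.measurableSet hnot] at hlimsup
      simp at hlimsup
    obtain ⟨x, hx⟩ := hmem
    refine ⟨t, x, ?_⟩
    rw [← hx] at hconv
    exact backward_key
      (fun n s hs => by rw [lintegral_eval_push2 _ _ hs, bary_map_dirac]) hconv

end Aux

/-- For a compact metric space `X`: the action of the topological semigroup `T` on `X` is
strongly proximal iff the induced action of `T` on `P(X)` is strongly proximal. -/
theorem stmt12 {X : Type*} [MetricSpace X] [CompactSpace X] [MeasurableSpace X] [BorelSpace X]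
    {T : Type*} [Semigroup T] [TopologicalSpace T] [ContinuousMul T]
    (act : T → C(X, X)) (hact : ∀ s t : T, act (s * t) = (act s).comp (act t)) :
    (∀ lam : ProbabilityMeasure X, ∃ (t : ℕ → T) (x : X),
      Tendsto (fun n => push (act (t n)) lam) atTop (𝓝 (diracPM x))) ↔
    (∀ ρ : ProbabilityMeasure (ProbabilityMeasure X), ∃ (t : ℕ → T) (μ : ProbabilityMeasure X),
      Tendsto (fun n => push2 (act (t n)) ρ) atTop (𝓝 (diracPM μ))) := by
  exact stmt12' act
end

section
/- Let V be a locally convex real vector space, {v₁,…,vₙ} linearly independent vectors, X their convex hull, and T a topological semigroup acting on X by surjective affine continuous maps. Then the action of T on X is proximal if and only if it is strongly proximal. -/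
open MeasureTheory Filter Topology Set
open scoped ENNReal NNReal

section Auxes

-- n-ary affinity from binary
lemma stmt16_affine_sum {V : Type*} [AddCommGroup V] [Module ℝ V] {ι : Type*} [DecidableEq ι]
    {X : Set V} (hX : Convex ℝ X) (f : V → V)
    (haff : ∀ x ∈ X, ∀ y ∈ X, ∀ a : ℝ, 0 ≤ a → a ≤ 1 →
      f (a • x + (1 - a) • y) = a • f x + (1 - a) • f y) :
    ∀ (s : Finset ι) (a : ι → ℝ) (x : ι → V), (∀ i ∈ s, 0 ≤ a i) →
      (∑ i ∈ s, a i) = 1 → (∀ i ∈ s, x i ∈ X) →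
      f (∑ i ∈ s, a i • x i) = ∑ i ∈ s, a i • f (x i) := by
  intro s
  induction s using Finset.induction_on with
  | empty => intro a x _ h1 _; simp at h1
  | insert j s hj ih =>
    intro a x h0 hsum hXx
    rw [Finset.sum_insert hj] at hsum ⊢
    rw [Finset.sum_insert hj]
    have hβ0 : 0 ≤ ∑ i ∈ s, a i := Finset.sum_nonneg fun i hi => h0 i (Finset.mem_insert_of_mem hi)
    by_cases hβ : (∑ i ∈ s, a i) = 0
    · have hall : ∀ i ∈ s, a i = 0 :=
        (Finset.sum_eq_zero_iff_of_nonneg fun i hi => h0 i (Finset.mem_insert_of_mem hi)).1 hβ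
      have haj : a j = 1 := by rw [hβ] at hsum; linarith
      have h1 : (∑ i ∈ s, a i • x i) = 0 :=
        Finset.sum_eq_zero fun i hi => by rw [hall i hi, zero_smul]
      have h2 : (∑ i ∈ s, a i • f (x i)) = 0 :=
        Finset.sum_eq_zero fun i hi => by rw [hall i hi, zero_smul]
      rw [h1, h2, add_zero, add_zero, haj, one_smul, one_smul]
    · have hβpos : 0 < ∑ i ∈ s, a i := lt_of_le_of_ne hβ0 (Ne.symm hβ)
      set β := ∑ i ∈ s, a i with hβdef
      have hy : (∑ i ∈ s, (a i / β) • x i) ∈ X := by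
        apply hX.sum_mem
        · exact fun i hi => div_nonneg (h0 i (Finset.mem_insert_of_mem hi)) hβ0
        · rw [← Finset.sum_div]; exact div_self hβ
        · exact fun i hi => hXx i (Finset.mem_insert_of_mem hi)
      have hβy : β • (∑ i ∈ s, (a i / β) • x i) = ∑ i ∈ s, a i • x i := by
        rw [Finset.smul_sum]
        exact Finset.sum_congr rfl fun i _ => by
          rw [smul_smul, mul_comm, div_mul_cancel₀ _ hβ]
      have haj0 : 0 ≤ a j := h0 j (Finset.mem_insert_self j s)
      have haj1 : a j ≤ 1 := by linarith
      have key := haff (x j) (hXx j (Finset.mem_insert_self j s)) _ hy (a j) haj0 haj1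
      have h1aj : 1 - a j = β := by linarith
      rw [h1aj, hβy] at key
      rw [key]
      congr 1
      rw [ih (fun i => a i / β) x
        (fun i hi => div_nonneg (h0 i (Finset.mem_insert_of_mem hi)) hβ0)
        (by rw [← Finset.sum_div]; exact div_self hβ)
        (fun i hi => hXx i (Finset.mem_insert_of_mem hi)), Finset.smul_sum]
      exact Finset.sum_congr rfl fun i _ => by
        rw [smul_smul, mul_comm, div_mul_cancel₀ _ hβ]


lemma stmt16_mem_lift {V : Type*} [AddCommGroup V] [Module ℝ V] {n : ℕ} (v : Fin n → V)
    {x : V} (hx : x ∈ convexHull ℝ (Set.range v)) :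
    ∃ a ∈ stdSimplex ℝ (Fin n), (∑ j, a j • v j) = x := by
  classical
  rw [convexHull_range_eq_exists_affineCombination] at hx
  obtain ⟨s, w, hw0, hw1, hw⟩ := hx
  refine ⟨fun i => if i ∈ s then w i else 0, ⟨fun i => ?_, ?_⟩, ?_⟩
  · dsimp only; split_ifs with h
    · exact hw0 i h
    · exact le_refl 0
  · simp only
    rw [Finset.sum_ite_mem, Finset.univ_inter]; exact hw1
  · rw [Finset.affineCombination_eq_linear_combination s v w hw1] at hw
    rw [← hw]
    have : ∀ j : Fin n, (if j ∈ s then w j else 0) • v j = if j ∈ s then w j • v j else 0 := by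
      intro j; split_ifs <;> simp
    simp only [this]
    rw [Finset.sum_ite_mem, Finset.univ_inter]


lemma stmt16_bump {V : Type*} [AddCommGroup V] [Module ℝ V] [TopologicalSpace V]
    [IsTopologicalAddGroup V] [ContinuousSMul ℝ V]
    {C : Set V} {z : V} (hC : C ∈ 𝓝 z) (hconv : Convex ℝ C) :
    ∃ f : BoundedContinuousFunction V ℝ, f z = 1 ∧ (∀ w, 0 ≤ f w) ∧ (∀ w, f w ≤ 1) ∧
      ∀ w, 0 < f w → w ∈ C := by
  set s : Set V := (fun w => z + w) ⁻¹' C with hsdef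
  have hsconv : Convex ℝ s := hconv.translate_preimage_right z
  have hs0 : s ∈ 𝓝 (0 : V) := by
    have : ContinuousAt (fun w : V => z + w) 0 := (continuous_const.add continuous_id).continuousAt
    have h := this.preimage_mem_nhds (by simpa using hC)
    simpa using h
  have hg : Continuous (gauge s) := continuous_gauge hsconv hs0
  have hginz : ∀ w, gauge s (w - z) < 1 → w ∈ C := by
    intro w hw
    have : w - z ∈ s :=
      gauge_lt_one_subset_self hsconv (mem_of_mem_nhds hs0) (absorbent_nhds_zero hs0) hw
    simpa [hsdef] using this
  set f0 : V → ℝ := fun w => max 0 (1 - gauge s (w - z)) with hf0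
  have hf0cont : Continuous f0 :=
    continuous_const.max (continuous_const.sub (hg.comp (continuous_sub_right z)))
  have hf0le : ∀ w, f0 w ≤ 1 := by
    intro w
    apply max_le (by norm_num)
    have := gauge_nonneg (s := s) (w - z)
    linarith
  refine ⟨BoundedContinuousFunction.mkOfBound ⟨f0, hf0cont⟩ 1 ?_, ?_, ?_, ?_, ?_⟩
  · intro a b
    have ha0 : 0 ≤ f0 a := le_max_left _ _
    have hb0 : 0 ≤ f0 b := le_max_left _ _
    have ha1 := hf0le a
    have hb1 := hf0le b
    rw [Real.dist_eq, abs_le]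
    constructor <;> simp only [ContinuousMap.coe_mk] <;> linarith
  · show f0 z = 1
    simp [hf0, gauge_zero]
  · exact fun w => le_max_left _ _
  · exact hf0le
  · intro w hw
    have hw' : 0 < f0 w := hw
    have : 1 - gauge s (w - z) > 0 := by
      by_contra h
      push_neg at h
      have h0 : f0 w = 0 := max_eq_left (by linarith)
      rw [h0] at hw'; exact lt_irrefl 0 hw'
    exact hginz w (by linarith)


lemma stmt16_extract {V : Type*} [AddCommGroup V] [Module ℝ V] [TopologicalSpace V]
    [IsTopologicalAddGroup V] [ContinuousSMul ℝ V] {n N : ℕ} (v : Fin n → V)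
    (x : Fin N → ℕ → V) (hx : ∀ i k, x i k ∈ convexHull ℝ (Set.range v)) :
    ∃ φ : ℕ → ℕ, StrictMono φ ∧ ∃ b : Fin N → Fin n → ℝ,
      (∀ i, b i ∈ stdSimplex ℝ (Fin n)) ∧
      ∃ L : Fin N → ℕ → Fin n → ℝ,
        (∀ i k, L i k ∈ stdSimplex ℝ (Fin n)) ∧
        (∀ i k, (∑ j, L i k j • v j) = x i (φ k)) ∧
        (∀ i, Tendsto (fun k => L i k) atTop (𝓝 (b i))) ∧
        (∀ i, Tendsto (fun k => x i (φ k)) atTop (𝓝 (∑ j, b i j • v j))) := by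
  classical
  have h : ∀ (i : Fin N) (k : ℕ), ∃ a ∈ stdSimplex ℝ (Fin n), (∑ j, a j • v j) = x i k :=
    fun i k => stmt16_mem_lift v (hx i k)
  choose L0 hL0Δ hL0σ using h
  have hS : IsCompact (Set.univ.pi fun _ : Fin N => stdSimplex ℝ (Fin n)) :=
    isCompact_univ_pi fun _ => isCompact_stdSimplex _ _
  have hG : ∀ k, (fun i => L0 i k) ∈ Set.univ.pi fun _ : Fin N => stdSimplex ℝ (Fin n) :=
    fun k => fun i _ => hL0Δ i k
  obtain ⟨b, hbS, φ, hφ, hconv⟩ := hS.tendsto_subseq hG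
  have hσ : Continuous fun a : Fin n → ℝ => ∑ j, a j • v j :=
    continuous_finset_sum _ fun j _ => (continuous_apply j).smul continuous_const
  have hcomp : ∀ i, Tendsto (fun k => L0 i (φ k)) atTop (𝓝 (b i)) := by
    intro i
    exact ((continuous_apply i).tendsto b).comp hconv
  refine ⟨φ, hφ, b, fun i => hbS i (Set.mem_univ i), fun i k => L0 i (φ k),
    fun i k => hL0Δ i (φ k), fun i k => hL0σ i (φ k), hcomp, fun i => ?_⟩
  have := (hσ.tendsto (b i)).comp (hcomp i)
  simpa only [Function.comp_def, hL0σ] using this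


end Auxes

/-- For a topological semigroup `T` acting by surjective affine continuous maps on the convex
hull `X` of a linearly independent finite set of vectors in a locally convex real TVS,
the action is proximal iff it is strongly proximal.  Proximality: any two points of `X`
can be pushed by a common sequence of `T` to a common limit.  Strong proximality: any
probability measure on `X` can be pushed by a sequence of `T` to a Dirac measure at a
point of `X`. -/
theorem stmt16 {V : Type*} [AddCommGroup V] [Module ℝ V] [TopologicalSpace V]
    [IsTopologicalAddGroup V] [ContinuousSMul ℝ V] [LocallyConvexSpace ℝ V]
    [MeasurableSpace V] [BorelSpace V]
    {n : ℕ} (v : Fin n → V) (hv : LinearIndependent ℝ v)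
    {T : Type*} [Semigroup T] [TopologicalSpace T] [ContinuousMul T] (act : T → V → V)
    (hmaps : ∀ t, Set.MapsTo (act t) (convexHull ℝ (Set.range v)) (convexHull ℝ (Set.range v)))
    (hsurj : ∀ t, Set.SurjOn (act t) (convexHull ℝ (Set.range v)) (convexHull ℝ (Set.range v)))
    (hcont : ∀ t, ContinuousOn (act t) (convexHull ℝ (Set.range v)))
    (haff : ∀ t, ∀ x ∈ convexHull ℝ (Set.range v), ∀ y ∈ convexHull ℝ (Set.range v),
      ∀ a : ℝ, 0 ≤ a → a ≤ 1 →
        act t (a • x + (1 - a) • y) = a • act t x + (1 - a) • act t y)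
    (hact : ∀ s t : T, ∀ x ∈ convexHull ℝ (Set.range v), act (s * t) x = act s (act t x)) :
    (∀ x ∈ convexHull ℝ (Set.range v), ∀ y ∈ convexHull ℝ (Set.range v),
      ∃ (t : ℕ → T) (z : V),
        Tendsto (fun k => act (t k) x) atTop (𝓝 z) ∧
        Tendsto (fun k => act (t k) y) atTop (𝓝 z)) ↔
    (∀ μ : ProbabilityMeasure ↥(convexHull ℝ (Set.range v)),
      ∃ (t : ℕ → T) (x : V), x ∈ convexHull ℝ (Set.range v) ∧
        Tendsto
          (fun k => μ.map (((hcont (t k)).comp_continuous continuous_subtype_val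
            (fun p => p.2)).measurable.aemeasurable))
          atTop (𝓝 ⟨MeasureTheory.Measure.dirac x, inferInstance⟩)) := by
  classical
  have hXconv : Convex ℝ (convexHull ℝ (Set.range v)) := convex_convexHull ℝ _
  have hvX : ∀ i, v i ∈ convexHull ℝ (Set.range v) :=
    fun i => subset_convexHull ℝ _ ⟨i, rfl⟩
  have hσmem : ∀ a ∈ stdSimplex ℝ (Fin n), (∑ j, a j • v j) ∈ convexHull ℝ (Set.range v) :=
    fun a ha => hXconv.sum_mem (fun j _ => ha.1 j) ha.2 (fun j _ => hvX j)
  have hσc : Continuous fun a : Fin n → ℝ => ∑ j, a j • v j :=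
    continuous_finset_sum _ fun j _ => (continuous_apply j).smul continuous_const
  have hsm : ∀ f : BoundedContinuousFunction V ℝ, StronglyMeasurable (f : V → ℝ) :=
    fun f => f.continuous.measurable.stronglyMeasurable
  constructor
  · -- proximal → strongly proximal
    intro hprox μ
    rcases Nat.eq_zero_or_pos n with hn | hn
    · -- X is empty: contradiction from the probability measure
      exfalso
      have hre : Set.range v = ∅ := by
        subst hn; exact Set.range_eq_empty v
      have hXe : convexHull ℝ (Set.range v) = ∅ := by rw [hre, convexHull_empty]
      have hEmpty : IsEmpty ↥(convexHull ℝ (Set.range v)) := by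
        rw [hXe]; infer_instance
      have h1 : (μ : Measure ↥(convexHull ℝ (Set.range v))) Set.univ = 1 := measure_univ
      rw [Set.univ_eq_empty_iff.2 hEmpty, measure_empty] at h1
      exact zero_ne_one h1
    set i0 : Fin n := ⟨0, hn⟩ with hi0def
    -- Main claim: a single sequence pushing all vertices to a common limit
    have key : ∀ m : ℕ, ∃ (t : ℕ → T) (b : Fin n → Fin n → ℝ),
        (∀ i, b i ∈ stdSimplex ℝ (Fin n)) ∧
        (∀ i i' : Fin n, (i : ℕ) < m → (i' : ℕ) < m →
          Inseparable (∑ j, b i j • v j) (∑ j, b i' j • v j)) ∧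
        (∀ i : Fin n, (i : ℕ) < m →
          Tendsto (fun k => act (t k) (v i)) atTop (𝓝 (∑ j, b i j • v j))) := by
      intro m
      induction m with
      | zero =>
        obtain ⟨t, z, -, -⟩ := hprox (v i0) (hvX i0) (v i0) (hvX i0)
        obtain ⟨a0, ha0, -⟩ := stmt16_mem_lift v (hvX i0)
        exact ⟨t, fun _ => a0, fun _ => ha0, fun i i' hi _ => Inseparable.refl _,
          fun i hi => absurd hi (Nat.not_lt_zero _)⟩
      | succ m ih =>
        obtain ⟨t, b, hbΔ, hbins, hbconv⟩ := ih
        by_cases hm : m < n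
        · set im : Fin n := ⟨m, hm⟩ with him_def
          have hmemX : ∀ (τ : T) (i : Fin n), act τ (v i) ∈ convexHull ℝ (Set.range v) :=
            fun τ i => hmaps τ (hvX i)
          obtain ⟨φ, hφ, c1, hc1Δ, L1, hL1Δ, hL1σ, hL1conv, hxconv⟩ :=
            stmt16_extract v (fun _ : Fin 1 => fun k => act (t k) (v im))
              (fun _ k => hmemX (t k) im)
          set t1 : ℕ → T := fun k => t (φ k) with ht1def
          set z : V := ∑ j, b i0 j • v j with hzdef
          set w : V := ∑ j, c1 0 j • v j with hwdef
          have hzX : z ∈ convexHull ℝ (Set.range v) := hσmem _ (hbΔ i0)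
          have hwX : w ∈ convexHull ℝ (Set.range v) := hσmem _ (hc1Δ 0)
          have hz : ∀ i : Fin n, (i : ℕ) < m →
              Tendsto (fun k => act (t1 k) (v i)) atTop (𝓝 z) := by
            intro i hi
            have hpos : (i0 : ℕ) < m := lt_of_le_of_lt (Nat.zero_le _) hi
            have heq : 𝓝 (∑ j, b i j • v j) = 𝓝 z := hbins i i0 hi hpos
            exact (heq ▸ hbconv i hi).comp hφ.tendsto_atTop
          have hwt : Tendsto (fun k => act (t1 k) (v im)) atTop (𝓝 w) := hxconv 0
          obtain ⟨s, ζ, hsz, hsw⟩ := hprox z hzX w hwX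
          have hcomp : ∀ j, ∀ i : Fin n, (i : ℕ) < m →
              Tendsto (fun k => act (s j * t1 k) (v i)) atTop (𝓝 (act (s j) z)) := by
            intro j i hi
            have h1 : Tendsto (fun k => act (t1 k) (v i)) atTop
                (𝓝[convexHull ℝ (Set.range v)] z) :=
              tendsto_nhdsWithin_iff.2 ⟨hz i hi, Eventually.of_forall fun k => hmemX (t1 k) i⟩
            exact (((hcont (s j)) z hzX).tendsto.comp h1).congr
              fun k => (hact (s j) (t1 k) (v i) (hvX i)).symm
          have hcompw : ∀ j,
              Tendsto (fun k => act (s j * t1 k) (v im)) atTop (𝓝 (act (s j) w)) := by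
            intro j
            have h1 : Tendsto (fun k => act (t1 k) (v im)) atTop
                (𝓝[convexHull ℝ (Set.range v)] w) :=
              tendsto_nhdsWithin_iff.2 ⟨hwt, Eventually.of_forall fun k => hmemX (t1 k) im⟩
            exact (((hcont (s j)) w hwX).tendsto.comp h1).congr
              fun k => (hact (s j) (t1 k) (v im) (hvX im)).symm
          have hstep : ∀ j : ℕ, ∃ (kk : ℕ) (β : Fin n → Fin n → ℝ),
              (∀ i, β i ∈ stdSimplex ℝ (Fin n)) ∧
              (∀ i : Fin n, (i : ℕ) < m →
                Inseparable (∑ jj, β i jj • v jj) (act (s j) z)) ∧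
              Inseparable (∑ jj, β im jj • v jj) (act (s j) w) ∧
              ∃ ℓ : Fin n → Fin n → ℝ, (∀ i, ℓ i ∈ stdSimplex ℝ (Fin n)) ∧
                (∀ i, (∑ jj, ℓ i jj • v jj) = act (s j * t1 kk) (v i)) ∧
                (∀ i, dist (ℓ i) (β i) < (1 : ℝ) / (j + 1)) := by
            intro j
            obtain ⟨ψ, hψ, β, hβΔ, L, hLΔ, hLσ, hLconv, hLxconv⟩ :=
              stmt16_extract v (fun i k => act (s j * t1 k) (v i))
                (fun i k => hmaps _ (hvX i))
            have hins1 : ∀ i : Fin n, (i : ℕ) < m →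
                Inseparable (∑ jj, β i jj • v jj) (act (s j) z) := fun i hi =>
              tendsto_nhds_unique_inseparable (hLxconv i)
                ((hcomp j i hi).comp hψ.tendsto_atTop)
            have hins2 : Inseparable (∑ jj, β im jj • v jj) (act (s j) w) :=
              tendsto_nhds_unique_inseparable (hLxconv im)
                ((hcompw j).comp hψ.tendsto_atTop)
            have hev : ∀ᶠ k in atTop, ∀ i : Fin n, dist (L i k) (β i) < (1 : ℝ) / (j + 1) :=
              eventually_all.2 fun i =>
                Metric.tendsto_nhds.1 (hLconv i) _ (by positivity)
            obtain ⟨kk, hkk⟩ := hev.exists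
            exact ⟨ψ kk, β, hβΔ, hins1, hins2, fun i => L i kk, fun i => hLΔ i kk,
              fun i => hLσ i kk, hkk⟩
          choose kk β hβΔ hβz hβw ℓ hℓΔ hℓσ hℓd using hstep
          have hS : IsCompact (Set.univ.pi fun _ : Fin n => stdSimplex ℝ (Fin n)) :=
            isCompact_univ_pi fun _ => isCompact_stdSimplex _ _
          obtain ⟨γ, hγS, J, hJ, hJconv⟩ :=
            hS.tendsto_subseq (x := fun j (i : Fin n) => β j i) (fun j i _ => hβΔ j i)
          have hγconv : ∀ i : Fin n, Tendsto (fun r => β (J r) i) atTop (𝓝 (γ i)) :=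
            fun i => ((continuous_apply i).tendsto γ).comp hJconv
          have hdz : Tendsto (fun r : ℕ => (1 : ℝ) / (J r + 1)) atTop (𝓝 0) := by
            apply squeeze_zero (fun r => by positivity) (g := fun r : ℕ => (1 : ℝ) / (r + 1))
            · intro r
              apply one_div_le_one_div_of_le (by positivity)
              have hle : (r : ℝ) ≤ (J r : ℝ) := by exact_mod_cast hJ.le_apply
              linarith
            · exact tendsto_one_div_add_atTop_nhds_zero_nat
          have hℓconv : ∀ i : Fin n, Tendsto (fun r => ℓ (J r) i) atTop (𝓝 (γ i)) := by
            intro i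
            rw [tendsto_iff_dist_tendsto_zero]
            apply squeeze_zero (fun r => dist_nonneg)
              (g := fun r => (1 : ℝ) / (J r + 1) + dist (β (J r) i) (γ i))
            · intro r
              refine (dist_triangle _ (β (J r) i) _).trans ?_
              exact add_le_add_left (hℓd (J r) i).le _
            · have h2 : Tendsto (fun r => dist (β (J r) i) (γ i)) atTop (𝓝 0) :=
                tendsto_iff_dist_tendsto_zero.1 (hγconv i)
              simpa using hdz.add h2
          have hfin : ∀ i : Fin n,
              Tendsto (fun r => act (s (J r) * t1 (kk (J r))) (v i)) atTop
                (𝓝 (∑ jj, γ i jj • v jj)) := fun i =>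
            ((hσc.tendsto (γ i)).comp (hℓconv i)).congr fun r => hℓσ (J r) i
          have hζz : Tendsto (fun r => act (s (J r)) z) atTop (𝓝 ζ) :=
            hsz.comp hJ.tendsto_atTop
          have hζw : Tendsto (fun r => act (s (J r)) w) atTop (𝓝 ζ) :=
            hsw.comp hJ.tendsto_atTop
          have hγins : ∀ i : Fin n, (i : ℕ) < m + 1 →
              Inseparable (∑ jj, γ i jj • v jj) ζ := by
            intro i hi
            have htog : Tendsto (fun r => (∑ jj, β (J r) i jj • v jj)) atTop
                (𝓝 (∑ jj, γ i jj • v jj)) := (hσc.tendsto (γ i)).comp (hγconv i)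
            have htoζ : Tendsto (fun r => (∑ jj, β (J r) i jj • v jj)) atTop (𝓝 ζ) := by
              rcases Nat.lt_succ_iff_lt_or_eq.1 hi with hi' | hi'
              · refine (nhds_basis_opens ζ).tendsto_right_iff.2 ?_
                rintro U ⟨hζU, hUopen⟩
                filter_upwards [hζz.eventually_mem (hUopen.mem_nhds hζU)] with r hr
                exact ((hβz (J r) i hi').mem_open_iff hUopen).2 hr
              · have him : i = im := Fin.ext hi'
                refine (nhds_basis_opens ζ).tendsto_right_iff.2 ?_
                rintro U ⟨hζU, hUopen⟩
                filter_upwards [hζw.eventually_mem (hUopen.mem_nhds hζU)] with r hr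
                rw [him]
                exact ((hβw (J r)).mem_open_iff hUopen).2 hr
            exact tendsto_nhds_unique_inseparable htog htoζ
          exact ⟨fun r => s (J r) * t1 (kk (J r)), γ, fun i => hγS i (Set.mem_univ i),
            fun i i' hi hi' => (hγins i hi).trans (hγins i' hi').symm, fun i hi => hfin i⟩
        · refine ⟨t, b, hbΔ, fun i i' _ _ => ?_, fun i _ => ?_⟩
          · exact hbins i i' (lt_of_lt_of_le i.2 (not_lt.1 hm))
              (lt_of_lt_of_le i'.2 (not_lt.1 hm))
          · exact hbconv i (lt_of_lt_of_le i.2 (not_lt.1 hm))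
    obtain ⟨t, b, hbΔ, hbins, hbconv⟩ := key n
    set z : V := ∑ j, b i0 j • v j with hzdef
    have hzX : z ∈ convexHull ℝ (Set.range v) := hσmem _ (hbΔ i0)
    have hconvz : ∀ i : Fin n, Tendsto (fun k => act (t k) (v i)) atTop (𝓝 z) := by
      intro i
      have heq : 𝓝 (∑ j, b i j • v j) = 𝓝 z := hbins i i0 i.2 hn
      exact heq ▸ hbconv i i.2
    refine ⟨t, z, hzX, ?_⟩
    refine ProbabilityMeasure.tendsto_iff_forall_integral_tendsto.2 ?_
    intro f
    have hR : ∫ ω, f ω ∂((⟨Measure.dirac z, inferInstance⟩ : ProbabilityMeasure V) :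
        Measure V) = f z := integral_dirac' _ _ (hsm f)
    show Tendsto (fun k => ∫ ω, f ω ∂((μ.map (((hcont (t k)).comp_continuous
        continuous_subtype_val (fun p => p.2)).measurable.aemeasurable)) : Measure V)) atTop
      (𝓝 (∫ ω, f ω ∂((⟨Measure.dirac z, inferInstance⟩ : ProbabilityMeasure V) : Measure V)))
    rw [hR]
    rw [Metric.tendsto_nhds]
    intro ε hε
    have hU : (f : V → ℝ) ⁻¹' Metric.ball (f z) (ε / 2) ∈ 𝓝 z :=
      (f.continuous.continuousAt (x := z)).preimage_mem_nhds
        (Metric.ball_mem_nhds (f z) (by linarith))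
    obtain ⟨C, ⟨hCn, hCc⟩, hCU⟩ :=
      (LocallyConvexSpace.convex_basis (𝕜 := ℝ) z).mem_iff.1 hU
    have hev : ∀ᶠ k in atTop, ∀ i : Fin n, act (t k) (v i) ∈ C :=
      eventually_all.2 fun i => (hconvz i).eventually_mem hCn
    filter_upwards [hev] with k hk
    have hXin : ∀ p : ↥(convexHull ℝ (Set.range v)), act (t k) (p : V) ∈ C := by
      intro p
      obtain ⟨a, haΔ, haσ⟩ := stmt16_mem_lift v p.2
      rw [← haσ, stmt16_affine_sum hXconv (act (t k)) (haff (t k)) Finset.univ a v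
        (fun i _ => haΔ.1 i) haΔ.2 (fun i _ => hvX i)]
      exact hCc.sum_mem (fun i _ => haΔ.1 i) haΔ.2 (fun i _ => hk i)
    have hrw : ∫ ω, f ω ∂((μ.map (((hcont (t k)).comp_continuous continuous_subtype_val
          (fun p => p.2)).measurable.aemeasurable)) : Measure V)
        = ∫ p, f (act (t k) (p : V)) ∂(μ : Measure ↥(convexHull ℝ (Set.range v))) := by
      rw [ProbabilityMeasure.toMeasure_map]
      exact integral_map (((hcont (t k)).comp_continuous continuous_subtype_val
        (fun p => p.2)).measurable.aemeasurable) (hsm f).aestronglyMeasurable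
    rw [hrw]
    set F : BoundedContinuousFunction ↥(convexHull ℝ (Set.range v)) ℝ :=
      f.compContinuous ⟨fun p => act (t k) (p : V),
        (hcont (t k)).comp_continuous continuous_subtype_val (fun p => p.2)⟩ with hFdef
    have hFval : ∀ p, F p = f (act (t k) (p : V)) := fun p => rfl
    have hsub : ∫ p, f (act (t k) (p : V)) ∂(μ : Measure ↥(convexHull ℝ (Set.range v))) - f z
        = ∫ p, (F p - f z) ∂(μ : Measure ↥(convexHull ℝ (Set.range v))) := by
      rw [integral_sub (F.integrable _) (integrable_const _)]
      simp [hFval]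
    have hbound : ‖∫ p, (F p - f z) ∂(μ : Measure ↥(convexHull ℝ (Set.range v)))‖ ≤ ε / 2 := by
      have := norm_integral_le_of_norm_le_const (μ := (μ : Measure ↥(convexHull ℝ (Set.range v))))
        (f := fun p => F p - f z) (C := ε / 2) ?_
      · simpa using this
      · apply Eventually.of_forall
        intro p
        show ‖F p - f z‖ ≤ ε / 2
        have hball : f (act (t k) (p : V)) ∈ Metric.ball (f z) (ε / 2) := hCU (hXin p)
        rw [hFval p, Real.norm_eq_abs]
        have := Metric.mem_ball.1 hball
        rw [Real.dist_eq] at this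
        linarith [abs_nonneg (f (act (t k) (p : V)) - f z), this.le]
    rw [Real.dist_eq]
    calc |∫ p, f (act (t k) (p : V)) ∂(μ : Measure ↥(convexHull ℝ (Set.range v))) - f z|
        = ‖∫ p, (F p - f z) ∂(μ : Measure ↥(convexHull ℝ (Set.range v)))‖ := by
          rw [← hsub, Real.norm_eq_abs]
      _ ≤ ε / 2 := hbound
      _ < ε := by linarith
  · -- strongly proximal → proximal
    intro hstrong x hx y hy
    set μ0 : Measure ↥(convexHull ℝ (Set.range v)) :=
      (2⁻¹ : ENNReal) • Measure.dirac (⟨x, hx⟩ : ↥(convexHull ℝ (Set.range v)))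
        + (2⁻¹ : ENNReal) • Measure.dirac (⟨y, hy⟩ : ↥(convexHull ℝ (Set.range v))) with hμ0def
    have hP : IsProbabilityMeasure μ0 := by
      constructor
      rw [hμ0def]
      simp [Measure.add_apply, Measure.smul_apply, smul_eq_mul]
      exact ENNReal.inv_two_add_inv_two
    obtain ⟨t, z, hzX, htend⟩ := hstrong ⟨μ0, hP⟩
    have hint : ∀ f : BoundedContinuousFunction V ℝ,
        Tendsto (fun k => 2⁻¹ * f (act (t k) x) + 2⁻¹ * f (act (t k) y)) atTop (𝓝 (f z)) := by
      intro f
      have h0 := ProbabilityMeasure.tendsto_iff_forall_integral_tendsto.1 htend f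
      replace h0 : Tendsto (fun k => ∫ ω, f ω ∂((ProbabilityMeasure.map
            (⟨μ0, hP⟩ : ProbabilityMeasure ↥(convexHull ℝ (Set.range v)))
            (((hcont (t k)).comp_continuous
            continuous_subtype_val (fun p => p.2)).measurable.aemeasurable)) : Measure V))
          atTop (𝓝 (∫ ω, f ω ∂((⟨Measure.dirac z, inferInstance⟩ : ProbabilityMeasure V) :
            Measure V))) := h0
      have hR : ∫ ω, f ω ∂((⟨Measure.dirac z, inferInstance⟩ : ProbabilityMeasure V) :
          Measure V) = f z := integral_dirac' _ _ (hsm f)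
      rw [hR] at h0
      have hL : ∀ k, ∫ ω, f ω ∂((ProbabilityMeasure.map
            (⟨μ0, hP⟩ : ProbabilityMeasure ↥(convexHull ℝ (Set.range v)))
            (((hcont (t k)).comp_continuous
            continuous_subtype_val (fun p => p.2)).measurable.aemeasurable)) : Measure V)
          = 2⁻¹ * f (act (t k) x) + 2⁻¹ * f (act (t k) y) := by
        intro k
        have hφm : Measurable (act (t k) ∘ (Subtype.val : ↥(convexHull ℝ (Set.range v)) → V)) :=
          ((hcont (t k)).comp_continuous continuous_subtype_val (fun p => p.2)).measurable
        change ∫ ω, f ω ∂(Measure.map (act (t k) ∘ Subtype.val) μ0) = _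
        have hmapeq : Measure.map (act (t k) ∘ (Subtype.val : ↥(convexHull ℝ (Set.range v)) → V)) μ0
            = (2⁻¹ : ENNReal) • Measure.dirac (act (t k) x)
              + (2⁻¹ : ENNReal) • Measure.dirac (act (t k) y) := by
          rw [hμ0def, Measure.map_add _ _ hφm, Measure.map_smul, Measure.map_smul,
            Measure.map_dirac' hφm, Measure.map_dirac' hφm]
          rfl
        have h1 : IsFiniteMeasure ((2⁻¹ : ENNReal) • Measure.dirac (act (t k) x)) := by
          constructor
          rw [Measure.smul_apply, smul_eq_mul]
          exact ENNReal.mul_lt_top (by simp) (by simp)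
        have h2 : IsFiniteMeasure ((2⁻¹ : ENNReal) • Measure.dirac (act (t k) y)) := by
          constructor
          rw [Measure.smul_apply, smul_eq_mul]
          exact ENNReal.mul_lt_top (by simp) (by simp)
        show ∫ ω, f ω ∂(Measure.map _ μ0) = _
        rw [hmapeq, integral_add_measure (f.integrable _) (f.integrable _),
          integral_smul_measure, integral_smul_measure,
          integral_dirac' _ _ (hsm f), integral_dirac' _ _ (hsm f)]
        simp [smul_eq_mul]
      simp only [hL] at h0
      exact h0
    have hlim : ∀ p : V, (∀ f : BoundedContinuousFunction V ℝ,
        Tendsto (fun k => 2⁻¹ * f (act (t k) p) + 2⁻¹ * f (act (t k)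
          (if True then y else x))) atTop (𝓝 (f z))) → True := fun _ _ => trivial
    refine ⟨t, z, ?_, ?_⟩
    · rw [tendsto_def]
      intro U hU
      obtain ⟨C, ⟨hCn, hCc⟩, hCU⟩ :=
        (LocallyConvexSpace.convex_basis (𝕜 := ℝ) z).mem_iff.1 hU
      obtain ⟨f, hfz, hf0, hf1, hfC⟩ := stmt16_bump hCn hCc
      have h34 : ∀ᶠ k in atTop,
          (3 : ℝ) / 4 < 2⁻¹ * f (act (t k) x) + 2⁻¹ * f (act (t k) y) := by
        have := hint f
        rw [hfz] at this
        exact this.eventually (eventually_gt_nhds (by norm_num))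
      have : ∀ᶠ k in atTop, act (t k) x ∈ U := by
        filter_upwards [h34] with k hk
        apply hCU
        apply hfC
        have h1 := hf1 (act (t k) y)
        have h0 := hf0 (act (t k) y)
        linarith
      exact this
    · rw [tendsto_def]
      intro U hU
      obtain ⟨C, ⟨hCn, hCc⟩, hCU⟩ :=
        (LocallyConvexSpace.convex_basis (𝕜 := ℝ) z).mem_iff.1 hU
      obtain ⟨f, hfz, hf0, hf1, hfC⟩ := stmt16_bump hCn hCc
      have h34 : ∀ᶠ k in atTop,
          (3 : ℝ) / 4 < 2⁻¹ * f (act (t k) x) + 2⁻¹ * f (act (t k) y) := by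
        have := hint f
        rw [hfz] at this
        exact this.eventually (eventually_gt_nhds (by norm_num))
      have : ∀ᶠ k in atTop, act (t k) y ∈ U := by
        filter_upwards [h34] with k hk
        apply hCU
        apply hfC
        have h1 := hf1 (act (t k) x)
        have h0 := hf0 (act (t k) x)
        linarith
      exact this
end
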